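/- Let A be a unital C*-algebra, let s, n ≥ 1 be integers, and set w = exp(2πi/s). Let (a^p_{ij}), for p ∈ ℤ/sℤ and 1 ≤ i,j ≤ n, be elements of A such that the matrix M_{(p,i),(q,j)} = a^{q-p}_{ij} is a magic unitary (all entries are projections, and each row and each column of M sums to 1). Define U_ij = Σ_{p ∈ ℤ/sℤ} w^{-p} a^p_{ij}. Then the n×n matrix U = (U_ij) satisfies the level-s cubic relations: (1) U is unitary, i.e., Σ_k U_ik U_jk* = δ_ij·1 and Σ_k U_ki* U_kj = δ_ij·1; (2) the transpose U^t is unitary; (3) each U_ij is normal and P_ij := U_ij U_ij* = Σ_p a^p_{ij} is a projection; (4) U_ij^s = P_ij. -/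

import Mathlib

open Complex in
/-- From a family `a^p_{ij}` whose associated circulant matrix is an
`(s,n)`-sudoku magic unitary, form `U_ij = Σ_p w^{-p} a^p_{ij}`, where
`w = exp(2πi/s)`. -/
noncomputable def sudokuToCubic (s n : ℕ) [NeZero s] {A : Type*} [CStarAlgebra A]
    (a : ZMod s → Fin n → Fin n → A) (i j : Fin n) : A :=
  ∑ p : ZMod s, (Complex.exp (2 * Real.pi * Complex.I / s) ^ (-(p.val : ℤ))) • a p i j

/-- Pairwise orthogonality of projections summing to `1` in a C*-algebra. -/
lemma proj_sum_one_orth {A : Type*} [CStarAlgebra A] {ι : Type*} [Fintype ι]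
    (e : ι → A) (hsa : ∀ i, star (e i) = e i) (hid : ∀ i, e i * e i = e i)
    (hsum : ∑ i, e i = 1) {k l : ι} (hkl : k ≠ l) : e k * e l = 0 := by
  classical
  letI := CStarAlgebra.spectralOrder A
  haveI := CStarAlgebra.spectralOrderedRing A
  have hnn : ∀ i, (0 : A) ≤ e i := fun i => by
    have h : e i = star (e i) * e i := by rw [hsa, hid]
    rw [h]; exact star_mul_self_nonneg _
  have hle : e l ≤ 1 - e k := by
    have h1 : e k + e l ≤ ∑ i, e i := by
      have := Finset.sum_le_sum_of_subset_of_nonneg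
        (Finset.subset_univ ({k, l} : Finset ι)) (fun i _ _ => hnn i)
      rwa [Finset.sum_pair hkl] at this
    rw [hsum] at h1
    rwa [le_sub_iff_add_le, add_comm]
  have h2 : e k * e l * e k ≤ 0 := by
    have h := star_left_conjugate_le_conjugate hle (e k)
    rw [hsa] at h
    calc e k * e l * e k ≤ e k * (1 - e k) * e k := h
      _ = 0 := by rw [mul_sub, mul_one, hid, sub_self, zero_mul]
  have h3 : star (e l * e k) * (e l * e k) = 0 := by
    have hrw : star (e l * e k) * (e l * e k) = e k * e l * e k := by
      rw [star_mul, hsa, hsa, ← mul_assoc, mul_assoc (e k), hid]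
    refine le_antisymm ?_ (star_mul_self_nonneg _)
    rw [hrw]; exact h2
  have h4 : e l * e k = 0 := (CStarRing.star_mul_self_eq_zero_iff _).mp h3
  have h5 : e k * e l = star (e l * e k) := by rw [star_mul, hsa, hsa]
  rw [h5, h4, star_zero]

/-- The root of unity `w = exp(2πi/s)`. -/
noncomputable def sudokuW (s : ℕ) : ℂ := Complex.exp (2 * Real.pi * Complex.I / s)

/-- The coefficient `w^{-p}`. -/
noncomputable def sudokuC (s : ℕ) (p : ZMod s) : ℂ := sudokuW s ^ (-(p.val : ℤ))

lemma sudokuW_pow (s : ℕ) [NeZero s] : sudokuW s ^ s = 1 := by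
  rw [sudokuW, ← Complex.exp_nat_mul, mul_div_cancel₀]
  · exact Complex.exp_two_pi_mul_I
  · exact_mod_cast (NeZero.ne s)

lemma sudokuW_star_mul (s : ℕ) : star (sudokuW s) * sudokuW s = 1 := by
  rw [sudokuW, Complex.star_def, ← Complex.exp_conj, ← Complex.exp_add]
  have h : (starRingEnd ℂ) (2 * Real.pi * Complex.I / s) =
      -(2 * Real.pi * Complex.I / s) := by
    rw [map_div₀, map_mul, map_mul, map_ofNat, Complex.conj_I, Complex.conj_ofReal,
      map_natCast]
    ring
  rw [h, neg_add_cancel, Complex.exp_zero]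

lemma sudokuW_ne_zero (s : ℕ) : sudokuW s ≠ 0 := Complex.exp_ne_zero _

lemma sudokuW_star (s : ℕ) : star (sudokuW s) = (sudokuW s)⁻¹ :=
  eq_inv_of_mul_eq_one_left (sudokuW_star_mul s)

lemma sudokuC_star (s : ℕ) (p : ZMod s) :
    star (sudokuC s p) = sudokuW s ^ ((p.val : ℤ)) := by
  rw [sudokuC, star_zpow₀, sudokuW_star, inv_zpow, ← zpow_neg, neg_neg]

lemma sudokuC_mul_star (s : ℕ) (p : ZMod s) : sudokuC s p * star (sudokuC s p) = 1 := by
  rw [sudokuC_star, sudokuC, ← zpow_add₀ (sudokuW_ne_zero s), neg_add_cancel, zpow_zero]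

lemma sudokuC_star_mul (s : ℕ) (p : ZMod s) : star (sudokuC s p) * sudokuC s p = 1 := by
  rw [mul_comm]; exact sudokuC_mul_star s p

lemma sudokuC_pow_s (s : ℕ) [NeZero s] (p : ZMod s) : sudokuC s p ^ s = 1 := by
  rw [sudokuC, ← zpow_natCast (sudokuW s ^ (-(p.val : ℤ))) s, ← zpow_mul, mul_comm,
    zpow_mul, zpow_natCast, sudokuW_pow, one_zpow]

/-- if the circulant matrix `M_{(p,i),(q,j)} = a^{q-p}_{ij}` is a magic
unitary, then `U_ij = Σ_p w^{-p} a^p_{ij}` satisfies the level-`s` cubic relations: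
`U` and its transpose are unitaries, each `U_ij` is normal with
`P_ij = U_ij U_ij* = Σ_p a^p_{ij}` a projection, and `U_ij^s = P_ij`. -/
theorem sudoku_gives_cubic (s n : ℕ) [NeZero s] (hn : 1 ≤ n)
    {A : Type*} [CStarAlgebra A]
    (a : ZMod s → Fin n → Fin n → A)
    (hproj : ∀ (p q : ZMod s) (i j : Fin n),
      star (a (q - p) i j) = a (q - p) i j ∧
        a (q - p) i j * a (q - p) i j = a (q - p) i j)
    (hrow : ∀ (p : ZMod s) (i : Fin n), ∑ q : ZMod s, ∑ j : Fin n, a (q - p) i j = 1)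
    (hcol : ∀ (q : ZMod s) (j : Fin n), ∑ p : ZMod s, ∑ i : Fin n, a (q - p) i j = 1) :
    (∀ i j, ∑ k, sudokuToCubic s n a i k * star (sudokuToCubic s n a j k) =
        if i = j then 1 else 0) ∧
    (∀ i j, ∑ k, star (sudokuToCubic s n a k i) * sudokuToCubic s n a k j =
        if i = j then 1 else 0) ∧
    (∀ i j, ∑ k, sudokuToCubic s n a k i * star (sudokuToCubic s n a k j) =
        if i = j then 1 else 0) ∧
    (∀ i j, ∑ k, star (sudokuToCubic s n a i k) * sudokuToCubic s n a j k =
        if i = j then 1 else 0) ∧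
    (∀ i j, sudokuToCubic s n a i j * star (sudokuToCubic s n a i j) =
        star (sudokuToCubic s n a i j) * sudokuToCubic s n a i j) ∧
    (∀ i j, sudokuToCubic s n a i j * star (sudokuToCubic s n a i j) =
        ∑ p : ZMod s, a p i j) ∧
    (∀ i j, star (sudokuToCubic s n a i j * star (sudokuToCubic s n a i j)) =
        sudokuToCubic s n a i j * star (sudokuToCubic s n a i j) ∧
      (sudokuToCubic s n a i j * star (sudokuToCubic s n a i j)) *
          (sudokuToCubic s n a i j * star (sudokuToCubic s n a i j)) =
        sudokuToCubic s n a i j * star (sudokuToCubic s n a i j)) ∧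
    (∀ i j, sudokuToCubic s n a i j ^ s =
        sudokuToCubic s n a i j * star (sudokuToCubic s n a i j)) := by
  -- basic facts about the entries
  have hproj' : ∀ (p : ZMod s) (i j : Fin n),
      star (a p i j) = a p i j ∧ a p i j * a p i j = a p i j := fun p i j => by
    simpa using hproj 0 p i j
  have hrowsum : ∀ i : Fin n, ∑ q : ZMod s, ∑ j : Fin n, a q i j = 1 := fun i => by
    simpa using hrow 0 i
  have hcolsum : ∀ j : Fin n, ∑ p : ZMod s, ∑ i : Fin n, a p i j = 1 := fun j => by
    rw [← hcol 0 j]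
    exact Fintype.sum_equiv (Equiv.neg (ZMod s)) _ _ (fun p => by simp)
  -- orthogonality within a row of the big matrix
  have horow : ∀ (i : Fin n) (p q : ZMod s) (j j' : Fin n),
      (p, j) ≠ (q, j') → a p i j * a q i j' = 0 := by
    intro i p q j j' hne
    exact proj_sum_one_orth (fun pk : ZMod s × Fin n => a pk.1 i pk.2)
      (fun pk => (hproj' pk.1 i pk.2).1) (fun pk => (hproj' pk.1 i pk.2).2)
      (by rw [Fintype.sum_prod_type]; exact hrowsum i) hne
  -- orthogonality within a column of the big matrix
  have hocol : ∀ (j : Fin n) (p q : ZMod s) (i i' : Fin n),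
      (p, i) ≠ (q, i') → a p i j * a q i' j = 0 := by
    intro j p q i i' hne
    exact proj_sum_one_orth (fun pk : ZMod s × Fin n => a pk.1 pk.2 j)
      (fun pk => (hproj' pk.1 pk.2 j).1) (fun pk => (hproj' pk.1 pk.2 j).2)
      (by rw [Fintype.sum_prod_type]; exact hcolsum j) hne
  -- U and its star as sums
  have hU : ∀ i j, sudokuToCubic s n a i j = ∑ p : ZMod s, sudokuC s p • a p i j := by
    intro i j; rfl
  have hstarU : ∀ i j, star (sudokuToCubic s n a i j) =
      ∑ p : ZMod s, star (sudokuC s p) • a p i j := by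
    intro i j
    rw [hU, star_sum]
    exact Finset.sum_congr rfl fun p _ => by rw [star_smul, (hproj' p i j).1]
  -- generic expansion of a product of two such sums
  have hexp : ∀ (c d : ZMod s → ℂ) (x y : ZMod s → A),
      (∑ p : ZMod s, c p • x p) * (∑ q : ZMod s, d q • y q) =
        ∑ p : ZMod s, ∑ q : ZMod s, (c p * d q) • (x p * y q) := by
    intro c d x y
    rw [Fintype.sum_mul_sum]
    exact Finset.sum_congr rfl fun p _ => Finset.sum_congr rfl fun q _ =>
      smul_mul_smul_comm (c p) (x p) (d q) (y q)
  -- collapse a double sum with vanishing off-diagonal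
  have hdiag : ∀ (F : ZMod s → ZMod s → A), (∀ p q, p ≠ q → F p q = 0) →
      ∑ p : ZMod s, ∑ q : ZMod s, F p q = ∑ p : ZMod s, F p p := by
    intro F hF
    refine Finset.sum_congr rfl fun p _ => ?_
    exact Finset.sum_eq_single p (fun q _ hq => hF p q (Ne.symm hq)) (by simp)
  -- case of all products vanishing
  have caseA : ∀ (c d : ZMod s → ℂ) (x y : ZMod s → Fin n → A),
      (∀ p q k, x p k * y q k = 0) →
      ∑ k : Fin n, (∑ p : ZMod s, c p • x p k) * (∑ q : ZMod s, d q • y q k) = 0 := by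
    intro c d x y h
    refine Finset.sum_eq_zero fun k _ => ?_
    rw [hexp c d (fun p => x p k) (fun q => y q k)]
    exact Finset.sum_eq_zero fun p _ => Finset.sum_eq_zero fun q _ => by
      rw [h, smul_zero]
  -- case of diagonal survival and total sum 1
  have caseB : ∀ (c d : ZMod s → ℂ), (∀ p, c p * d p = 1) →
      ∀ (x y : ZMod s → Fin n → A),
      (∀ p q k, p ≠ q → x p k * y q k = 0) →
      (∑ k : Fin n, ∑ p : ZMod s, x p k * y p k = 1) →
      ∑ k : Fin n, (∑ p : ZMod s, c p • x p k) * (∑ q : ZMod s, d q • y q k) = 1 := by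
    intro c d hcd x y horth hsum
    calc ∑ k : Fin n, (∑ p : ZMod s, c p • x p k) * (∑ q : ZMod s, d q • y q k)
        = ∑ k : Fin n, ∑ p : ZMod s, ∑ q : ZMod s, (c p * d q) • (x p k * y q k) :=
          Finset.sum_congr rfl fun k _ => hexp c d (fun p => x p k) (fun q => y q k)
      _ = ∑ k : Fin n, ∑ p : ZMod s, (c p * d p) • (x p k * y p k) := by
          refine Finset.sum_congr rfl fun k _ => hdiag _ fun p q hpq => ?_
          rw [horth p q k hpq, smul_zero]
      _ = ∑ k : Fin n, ∑ p : ZMod s, x p k * y p k := by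
          simp only [hcd, one_smul]
      _ = 1 := hsum
  -- the projection identity U_ij U_ij* = Σ_p a_p
  have hP : ∀ i j, sudokuToCubic s n a i j * star (sudokuToCubic s n a i j) =
      ∑ p : ZMod s, a p i j := by
    intro i j
    rw [hstarU i j, hU i j,
      hexp (sudokuC s) (fun q => star (sudokuC s q)) (fun p => a p i j) (fun q => a q i j)]
    rw [hdiag _ (fun p q hpq => by
      rw [horow i p q j j (by simpa using hpq), smul_zero])]
    refine Finset.sum_congr rfl fun p _ => ?_
    rw [sudokuC_mul_star, (hproj' p i j).2, one_smul]
  have hP' : ∀ i j, star (sudokuToCubic s n a i j) * sudokuToCubic s n a i j =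
      ∑ p : ZMod s, a p i j := by
    intro i j
    rw [hstarU i j, hU i j,
      hexp (fun p => star (sudokuC s p)) (sudokuC s) (fun p => a p i j) (fun q => a q i j)]
    rw [hdiag _ (fun p q hpq => by
      rw [horow i p q j j (by simpa using hpq), smul_zero])]
    refine Finset.sum_congr rfl fun p _ => ?_
    rw [sudokuC_star_mul, (hproj' p i j).2, one_smul]
  refine ⟨?_, ?_, ?_, ?_, ?_, hP, ?_, ?_⟩
  · -- (1) rows of U
    intro i j
    rcases eq_or_ne i j with rfl | hij
    · rw [if_pos rfl]
      simp only [hstarU]; simp only [hU]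
      refine caseB _ _ (sudokuC_mul_star s) _ _
        (fun p q k hpq => hocol k p q i i (by simpa using hpq)) ?_
      calc ∑ k : Fin n, ∑ p : ZMod s, a p i k * a p i k
          = ∑ k : Fin n, ∑ p : ZMod s, a p i k :=
            Finset.sum_congr rfl fun k _ => Finset.sum_congr rfl fun p _ =>
              (hproj' p i k).2
        _ = 1 := by rw [Finset.sum_comm]; exact hrowsum i
    · rw [if_neg hij]
      simp only [hstarU]; simp only [hU]
      exact caseA _ _ _ _ (fun p q k => hocol k p q i j (by simp [hij]))
  · -- (2) columns of U
    intro i j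
    rcases eq_or_ne i j with rfl | hij
    · rw [if_pos rfl]
      simp only [hstarU]; simp only [hU]
      refine caseB _ _ (sudokuC_star_mul s) _ _
        (fun p q k hpq => horow k p q i i (by simpa using hpq)) ?_
      calc ∑ k : Fin n, ∑ p : ZMod s, a p k i * a p k i
          = ∑ k : Fin n, ∑ p : ZMod s, a p k i :=
            Finset.sum_congr rfl fun k _ => Finset.sum_congr rfl fun p _ =>
              (hproj' p k i).2
        _ = 1 := by rw [Finset.sum_comm]; exact hcolsum i
    · rw [if_neg hij]
      simp only [hstarU]; simp only [hU]
      exact caseA _ _ _ _ (fun p q k => horow k p q i j (by simp [hij]))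
  · -- (3) rows of Uᵗ
    intro i j
    rcases eq_or_ne i j with rfl | hij
    · rw [if_pos rfl]
      simp only [hstarU]; simp only [hU]
      refine caseB _ _ (sudokuC_mul_star s) _ _
        (fun p q k hpq => horow k p q i i (by simpa using hpq)) ?_
      calc ∑ k : Fin n, ∑ p : ZMod s, a p k i * a p k i
          = ∑ k : Fin n, ∑ p : ZMod s, a p k i :=
            Finset.sum_congr rfl fun k _ => Finset.sum_congr rfl fun p _ =>
              (hproj' p k i).2
        _ = 1 := by rw [Finset.sum_comm]; exact hcolsum i
    · rw [if_neg hij]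
      simp only [hstarU]; simp only [hU]
      exact caseA _ _ _ _ (fun p q k => horow k p q i j (by simp [hij]))
  · -- (4) columns of Uᵗ
    intro i j
    rcases eq_or_ne i j with rfl | hij
    · rw [if_pos rfl]
      simp only [hstarU]; simp only [hU]
      refine caseB _ _ (sudokuC_star_mul s) _ _
        (fun p q k hpq => hocol k p q i i (by simpa using hpq)) ?_
      calc ∑ k : Fin n, ∑ p : ZMod s, a p i k * a p i k
          = ∑ k : Fin n, ∑ p : ZMod s, a p i k :=
            Finset.sum_congr rfl fun k _ => Finset.sum_congr rfl fun p _ =>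
              (hproj' p i k).2
        _ = 1 := by rw [Finset.sum_comm]; exact hrowsum i
    · rw [if_neg hij]
      simp only [hstarU]; simp only [hU]
      exact caseA _ _ _ _ (fun p q k => hocol k p q i j (by simp [hij]))
  · -- (5) normality
    intro i j
    rw [hP, hP']
  · -- (7) P is a projection
    intro i j
    constructor
    · rw [hP, star_sum]
      exact Finset.sum_congr rfl fun p _ => (hproj' p i j).1
    · rw [hP, Fintype.sum_mul_sum]
      rw [hdiag _ (fun p q hpq => horow i p q j j (by simpa using hpq))]
      exact Finset.sum_congr rfl fun p _ => (hproj' p i j).2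
  · -- (8) U^s = P
    intro i j
    have hpow : ∀ m : ℕ, sudokuToCubic s n a i j ^ (m + 1) =
        ∑ p : ZMod s, (sudokuC s p ^ (m + 1)) • a p i j := by
      intro m
      induction m with
      | zero => simp only [zero_add, pow_one]; exact hU i j
      | succ m ih =>
        rw [pow_succ, ih, hU i j,
          hexp (fun p => sudokuC s p ^ (m + 1)) (sudokuC s) (fun p => a p i j)
            (fun q => a q i j)]
        rw [hdiag _ (fun p q hpq => by
          rw [horow i p q j j (by simpa using hpq), smul_zero])]
        refine Finset.sum_congr rfl fun p _ => ?_
        rw [← pow_succ, (hproj' p i j).2]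
    obtain ⟨t, rfl⟩ : ∃ t, s = t + 1 :=
      ⟨s - 1, (Nat.succ_pred_eq_of_pos (Nat.pos_of_ne_zero (NeZero.ne s))).symm⟩
    rw [hpow t, hP]
    exact Finset.sum_congr rfl fun p _ => by rw [sudokuC_pow_s, one_smul]
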